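/- arXiv:2006.05620 — 2 statements merged into one kernel-verified Lean document; each statement's English description precedes it below -/
import Mathlib

section
/- Let v ∈ ℝ^k, p > 1, q = p/(p-1), ε > 0, 1 ≤ n ≤ k, and let S = {a ∈ ℝ^k : ‖a‖_p = ε and a has at most n nonzero entries}. Then max_{a ∈ S} aᵀv = ε ‖h‖_q, where h = top_n(v) is obtained from v by keeping the n coordinates of largest absolute value and setting all others to zero. -/
theorem constrained_max_eq_topn (k n : ℕ) (hn : 1 ≤ n) (hnk : n ≤ k)
    (v : Fin k → ℝ) (p ε q : ℝ) (hp : 1 < p) (hε : 0 < ε) (hq : q = p / (p - 1))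
    (T : Finset (Fin k)) (hT : T.card = n)
    (hTtop : ∀ i ∈ T, ∀ j, j ∉ T → |v j| ≤ |v i|)
    (h : Fin k → ℝ) (hh : h = fun i => if i ∈ T then v i else 0) :
    IsGreatest {s : ℝ | ∃ a : Fin k → ℝ,
        (∑ i, |a i| ^ p) ^ (1 / p) = ε ∧
        (Finset.univ.filter (fun i => a i ≠ 0)).card ≤ n ∧
        s = ∑ i, a i * v i}
      (ε * (∑ i, |h i| ^ q) ^ (1 / q)) := by
  have hpq : p.HolderConjugate q := (Real.holderConjugate_iff_eq_conjExponent hp).2 hq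
  have hq1 : 1 < q := hpq.symm.lt
  have hq0 : (0:ℝ) < q := by linarith
  have hp0 : (0:ℝ) < p := by linarith
  set Cq : ℝ := ∑ i ∈ T, |v i| ^ q with hCq
  have hCq0 : 0 ≤ Cq := Finset.sum_nonneg fun i _ => Real.rpow_nonneg (abs_nonneg _) _
  have hsum_h : (∑ i, |h i| ^ q) = Cq := by
    rw [hh]
    refine (Finset.sum_subset (Finset.subset_univ T) (fun x _ hx => ?_)).symm.trans ?_
    · simp [hx, Real.zero_rpow hq0.ne']
    · exact Finset.sum_congr rfl fun i hi => by simp [hi]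
  have key : ∀ S : Finset (Fin k), S.card ≤ n →
      (∑ i ∈ S, |v i| ^ q) ≤ Cq := by
    intro S hS
    have h1 : ∑ i ∈ S ∩ T, |v i| ^ q + ∑ i ∈ S \ T, |v i| ^ q = ∑ i ∈ S, |v i| ^ q :=
      Finset.sum_inter_add_sum_sdiff S T _
    have h2 : ∑ i ∈ T ∩ S, |v i| ^ q + ∑ i ∈ T \ S, |v i| ^ q = ∑ i ∈ T, |v i| ^ q :=
      Finset.sum_inter_add_sum_sdiff T S _
    rw [Finset.inter_comm] at h1
    have hcard : (S \ T).card ≤ (T \ S).card := by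
      have e1 : (S \ T).card + (S ∩ T).card = S.card :=
        Finset.card_sdiff_add_card_inter S T
      have e2 : (T \ S).card + (T ∩ S).card = T.card :=
        Finset.card_sdiff_add_card_inter T S
      rw [Finset.inter_comm] at e1
      omega
    have hdiff : ∑ i ∈ S \ T, |v i| ^ q ≤ ∑ i ∈ T \ S, |v i| ^ q := by
      rcases Finset.eq_empty_or_nonempty (T \ S) with he | hne
      · rw [he] at hcard
        simp only [Finset.card_empty, Nat.le_zero, Finset.card_eq_zero] at hcard
        simp [hcard, he]
      · obtain ⟨i0, hi0, hmin⟩ := Finset.exists_min_image (T \ S) (fun i => |v i| ^ q) hne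
        have hi0T : i0 ∈ T := (Finset.mem_sdiff.1 hi0).1
        have hnn : 0 ≤ |v i0| ^ q := Real.rpow_nonneg (abs_nonneg _) _
        calc ∑ i ∈ S \ T, |v i| ^ q
            ≤ (S \ T).card • (|v i0| ^ q) := by
              refine Finset.sum_le_card_nsmul _ _ _ fun j hj => ?_
              have hjT : j ∉ T := (Finset.mem_sdiff.1 hj).2
              exact Real.rpow_le_rpow (abs_nonneg _) (hTtop i0 hi0T j hjT) hq0.le
          _ ≤ (T \ S).card • (|v i0| ^ q) := by
              simp only [nsmul_eq_mul]
              exact mul_le_mul_of_nonneg_right (by exact_mod_cast hcard) hnn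
          _ ≤ ∑ i ∈ T \ S, |v i| ^ q :=
              Finset.card_nsmul_le_sum _ _ _ fun i hi => hmin i hi
    linarith
  have hsv : ∀ x : ℝ, Real.sign x * x = |x| := by
    intro x
    rcases lt_trichotomy x 0 with hx | hx | hx
    · rw [Real.sign_of_neg hx, abs_of_neg hx]; ring
    · simp [hx]
    · rw [Real.sign_of_pos hx, abs_of_pos hx]; ring
  constructor
  · -- membership: exhibit the maximizer
    rcases eq_or_lt_of_le hCq0 with hC0 | hCpos
    · -- Cq = 0 : v vanishes on T, hence everywhere
      have hvT : ∀ i ∈ T, v i = 0 := by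
        intro i hi
        have h0 := (Finset.sum_eq_zero_iff_of_nonneg
          (fun j _ => Real.rpow_nonneg (abs_nonneg _) _)).1 hC0.symm i hi
        exact abs_eq_zero.1 ((Real.rpow_eq_zero (abs_nonneg _) hq0.ne').1 h0)
      obtain ⟨i0, hi0⟩ := Finset.card_pos.1 (by rw [hT]; exact hn)
      have hv : ∀ i, v i = 0 := by
        intro i
        by_cases hi : i ∈ T
        · exact hvT i hi
        · have h1 := hTtop i0 hi0 i hi
          rw [hvT i0 hi0] at h1
          have h2 : |v i| ≤ 0 := by simpa using h1
          exact abs_eq_zero.1 (le_antisymm h2 (abs_nonneg _))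
      refine ⟨fun i => if i = i0 then ε else 0, ?_, ?_, ?_⟩
      · have h3 : (∑ i, |if i = i0 then ε else 0| ^ p) = ε ^ p := by
          rw [Finset.sum_eq_single i0]
          · simp [abs_of_pos hε]
          · intro j _ hj; simp [hj, Real.zero_rpow hp0.ne']
          · simp
        rw [h3, ← Real.rpow_mul hε.le, mul_one_div, div_self hp0.ne', Real.rpow_one]
      · calc (Finset.univ.filter fun i => (if i = i0 then ε else 0) ≠ 0).card
            ≤ ({i0} : Finset (Fin k)).card := by
              apply Finset.card_le_card
              intro j hj
              simp only [Finset.mem_filter] at hj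
              rcases eq_or_ne j i0 with hji | hji
              · simp [hji]
              · exact absurd (by simp [hji]) hj.2
          _ = 1 := Finset.card_singleton i0
          _ ≤ n := hn
      · rw [hsum_h, ← hC0, Real.zero_rpow (by positivity : (1:ℝ)/q ≠ 0), mul_zero]
        exact (Finset.sum_eq_zero fun i _ => by rw [hv i, mul_zero]).symm
    · -- Cq > 0 : standard Hölder extremizer
      set a : Fin k → ℝ := fun i =>
        if i ∈ T then ε * Real.sign (v i) * |v i| ^ (q - 1) / Cq ^ (1/p) else 0 with ha
      have hCp : (0:ℝ) < Cq ^ (1/p) := Real.rpow_pos_of_pos hCpos _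
      have habs : ∀ i ∈ T, |a i| = ε * |v i| ^ (q - 1) / Cq ^ (1/p) := by
        intro i hi
        rw [ha]; simp only [if_pos hi]
        rcases eq_or_ne (v i) 0 with hvi | hvi
        · simp [hvi, Real.zero_rpow (by linarith : q - 1 ≠ 0)]
        · rw [abs_div, abs_mul, abs_mul, abs_of_pos hε,
            abs_of_nonneg (Real.rpow_nonneg (abs_nonneg _) _),
            abs_of_pos hCp]
          rcases lt_or_gt_of_ne hvi with hlt | hgt
          · rw [Real.sign_of_neg hlt]; simp
          · rw [Real.sign_of_pos hgt]; simp
      have hqp : (q - 1) * p = q := by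
        have := hpq.symm.sub_one_mul_conj
        linarith
      have hap : ∀ i ∈ T, |a i| ^ p = ε ^ p * |v i| ^ q / Cq := by
        intro i hi
        rw [habs i hi, Real.div_rpow (by positivity) hCp.le,
          Real.mul_rpow hε.le (Real.rpow_nonneg (abs_nonneg _) _),
          ← Real.rpow_mul (abs_nonneg _), hqp,
          ← Real.rpow_mul hCpos.le, one_div_mul_cancel hp0.ne', Real.rpow_one]
      have hsum_ap : (∑ i, |a i| ^ p) = ε ^ p := by
        rw [← Finset.sum_subset (Finset.subset_univ T) (fun x _ hx => by
          rw [ha]; simp [hx, Real.zero_rpow hp0.ne'])]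
        rw [Finset.sum_congr rfl hap, ← Finset.sum_div, ← Finset.mul_sum, ← hCq,
          mul_div_assoc, div_self hCpos.ne', mul_one]
      have hmq : ∀ x : ℝ, |x| ^ (q - 1) * |x| = |x| ^ q := by
        intro x
        rcases eq_or_ne x 0 with hx | hx
        · simp [hx, Real.zero_rpow (by linarith : q - 1 ≠ 0), Real.zero_rpow hq0.ne']
        · have hx0 : (0:ℝ) < |x| := abs_pos.2 hx
          rw [← Real.rpow_add_one hx0.ne']
          congr 1
          ring
      refine ⟨a, ?_, ?_, ?_⟩
      · rw [hsum_ap, ← Real.rpow_mul hε.le, mul_one_div, div_self hp0.ne', Real.rpow_one]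
      · calc (Finset.univ.filter fun i => a i ≠ 0).card ≤ T.card := by
              apply Finset.card_le_card
              intro j hj
              simp only [Finset.mem_filter] at hj
              by_contra hjT
              exact hj.2 (by rw [ha]; simp [hjT])
          _ = n := hT
      · rw [hsum_h]
        rw [← Finset.sum_subset (Finset.subset_univ T) (fun x _ hx => by
          rw [ha]; simp [hx])]
        have hterm : ∀ i ∈ T, a i * v i = ε * |v i| ^ q / Cq ^ (1/p) := by
          intro i hi
          rw [ha]; simp only [if_pos hi]
          rw [div_mul_eq_mul_div]
          congr 1
          calc ε * Real.sign (v i) * |v i| ^ (q - 1) * v i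
              = ε * (|v i| ^ (q - 1) * (Real.sign (v i) * v i)) := by ring
            _ = ε * (|v i| ^ (q - 1) * |v i|) := by rw [hsv]
            _ = ε * |v i| ^ q := by rw [hmq]
        rw [Finset.sum_congr rfl hterm, ← Finset.sum_div, ← Finset.mul_sum, ← hCq]
        rw [mul_div_assoc]
        congr 1
        rw [eq_div_iff hCp.ne', ← Real.rpow_add hCpos,
          show 1/q + 1/p = 1 by
            rw [one_div, one_div]; linarith [hpq.inv_add_inv_eq_one],
          Real.rpow_one]
  · -- upper bound
    rintro s ⟨a, hnorm, hcard, rfl⟩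
    set S : Finset (Fin k) := Finset.univ.filter fun i => a i ≠ 0 with hS
    have hzero : ∀ x, x ∉ S → a x = 0 := by
      intro x hx
      by_contra hax
      exact hx (by rw [hS]; simp [hax])
    have h1 : (∑ i, a i * v i) = ∑ i ∈ S, a i * v i :=
      (Finset.sum_subset (Finset.subset_univ S) fun x _ hx => by
        rw [hzero x hx, zero_mul]).symm
    have h2 := Real.inner_le_Lp_mul_Lq S a v hpq
    have h3 : (∑ i ∈ S, |a i| ^ p) = ∑ i, |a i| ^ p :=
      Finset.sum_subset (Finset.subset_univ S) fun x _ hx => by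
        rw [hzero x hx]; simp [Real.zero_rpow hp0.ne']
    have h4 : (∑ i ∈ S, |v i| ^ q) ^ (1/q) ≤ Cq ^ (1/q) :=
      Real.rpow_le_rpow (Finset.sum_nonneg fun i _ => Real.rpow_nonneg (abs_nonneg _) _)
        (key S hcard) (by positivity)
    rw [h3, hnorm] at h2
    rw [h1, hsum_h]
    exact h2.trans (mul_le_mul_of_nonneg_left h4 hε.le)
end

section
/- Let L : ℝ^k → ℝ be convex with L-Lipschitz gradient (L-smooth) on a neighborhood containing w + S, where S = {a : ‖a‖_p = ε, ‖a‖₀ ≤ n}, p > 1, q = p/(p-1). Let g = ∇L(w) with ‖g‖₂ = G > 0, h = top_n(g), and let â = argmax_{a∈S} aᵀg be the gradient-based corruption. Then for any a* ∈ S, L(w + a*) − L(w) ≤ ε‖h‖_q + (L/2)‖a*‖₂², and L(w + â) − L(w) ≥ ε‖h‖_q. -/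
open scoped RealInnerProductSpace

lemma line_hasDerivAt {k : ℕ} (f : EuclideanSpace ℝ (Fin k) → ℝ)
    (w a : EuclideanSpace ℝ (Fin k)) (t : ℝ)
    (hx : DifferentiableAt ℝ f (w + t • a)) :
    HasDerivAt (fun s : ℝ => f (w + s • a)) ⟪gradient f (w + t • a), a⟫ t := by
  have h1 : HasDerivAt (fun s : ℝ => w + s • a) a t := by
    simpa using ((hasDerivAt_id t).smul_const a).const_add w
  have h2 : HasFDerivAt f
      (InnerProductSpace.toDual ℝ _ (gradient f (w + t • a)) :
        EuclideanSpace ℝ (Fin k) →L[ℝ] ℝ) (w + t • a) :=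
    hx.hasGradientAt
  have h3 := h2.comp_hasDerivAt t h1
  exact h3

theorem smooth_convex_corruption_bounds (k n : ℕ) (hn : 1 ≤ n) (hnk : n ≤ k)
    (p ε q Lc G : ℝ) (hp : 1 < p) (hq : q = p / (p - 1)) (hε : 0 < ε)
    (f : EuclideanSpace ℝ (Fin k) → ℝ)
    (w : EuclideanSpace ℝ (Fin k))
    (U : Set (EuclideanSpace ℝ (Fin k)))
    (S : Set (EuclideanSpace ℝ (Fin k)))
    (hS : S = {a : EuclideanSpace ℝ (Fin k) |
        (∑ i, |a i| ^ p) ^ (1 / p) = ε ∧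
        (Finset.univ.filter (fun i => a i ≠ 0)).card ≤ n})
    (hwU : w ∈ U) (hU : ∀ a ∈ S, w + a ∈ U)
    (hUopen : IsOpen U) (hUconv : Convex ℝ U)
    (hdiff : ∀ x ∈ U, DifferentiableAt ℝ f x)
    (hconv : ConvexOn ℝ U f)
    (hsmooth : ∀ x ∈ U, ∀ y ∈ U, ‖gradient f x - gradient f y‖ ≤ Lc * ‖x - y‖)
    (g : EuclideanSpace ℝ (Fin k)) (hg : g = gradient f w)
    (hG : ‖g‖ = G) (hGpos : 0 < G)
    (T : Finset (Fin k)) (hT : T.card = n)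
    (hTtop : ∀ i ∈ T, ∀ j, j ∉ T → |g j| ≤ |g i|)
    (h : Fin k → ℝ) (hh : h = fun i => if i ∈ T then g i else 0)
    (ahat : EuclideanSpace ℝ (Fin k)) (hahatS : ahat ∈ S)
    (hmax : ∀ a ∈ S, ⟪a, g⟫ ≤ ⟪ahat, g⟫)
    (hval : ⟪ahat, g⟫ = ε * (∑ i, |h i| ^ q) ^ (1 / q)) :
    (∀ a ∈ S, f (w + a) - f w ≤ ε * (∑ i, |h i| ^ q) ^ (1 / q) + Lc / 2 * ‖a‖ ^ 2) ∧
    ε * (∑ i, |h i| ^ q) ^ (1 / q) ≤ f (w + ahat) - f w := by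
  have hseg : ∀ (a : EuclideanSpace ℝ (Fin k)), w + a ∈ U →
      ∀ t ∈ Set.Icc (0:ℝ) 1, w + t • a ∈ U := by
    intro a hwa t ht
    have hmem := hUconv hwU hwa (by linarith [ht.2] : (0:ℝ) ≤ 1 - t) ht.1 (by ring)
    have he : (1 - t) • w + t • (w + a) = w + t • a := by module
    rwa [he] at hmem
  constructor
  · -- upper bound
    intro a ha
    have hwa : w + a ∈ U := hU a ha
    set ψ : ℝ → ℝ := fun t => f (w + t • a) - t * ⟪g, a⟫ - Lc / 2 * t ^ 2 * ‖a‖ ^ 2 with hψ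
    have hψd : ∀ t ∈ Set.Icc (0:ℝ) 1, HasDerivAt ψ
        (⟪gradient f (w + t • a), a⟫ - ⟪g, a⟫ - Lc * t * ‖a‖ ^ 2) t := by
      intro t ht
      have h1 := line_hasDerivAt f w a t (hdiff _ (hseg a hwa t ht))
      have h2 : HasDerivAt (fun s : ℝ => s * ⟪g, a⟫) ⟪g, a⟫ t := by
        simpa using (hasDerivAt_id t).mul_const (⟪g, a⟫ : ℝ)
      have h3 : HasDerivAt (fun s : ℝ => Lc / 2 * s ^ 2 * ‖a‖ ^ 2)
          (Lc * t * ‖a‖ ^ 2) t := by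
        have := ((hasDerivAt_pow 2 t).const_mul (Lc / 2)).mul_const (‖a‖ ^ 2)
        exact this.congr_deriv (by rw [show (2:ℕ) - 1 = 1 from rfl]; push_cast; ring)
      have h4 := (h1.sub h2).sub h3
      exact h4
    have hnonpos : ∀ t ∈ Set.Icc (0:ℝ) 1,
        ⟪gradient f (w + t • a), a⟫ - ⟪g, a⟫ - Lc * t * ‖a‖ ^ 2 ≤ 0 := by
      intro t ht
      have h1 : ⟪gradient f (w + t • a) - g, a⟫ ≤ ‖gradient f (w + t • a) - g‖ * ‖a‖ :=
        real_inner_le_norm _ _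
      have h2 : ‖gradient f (w + t • a) - g‖ ≤ Lc * (t * ‖a‖) := by
        have := hsmooth _ (hseg a hwa t ht) _ hwU
        rw [hg]
        calc ‖gradient f (w + t • a) - gradient f w‖ ≤ Lc * ‖(w + t • a) - w‖ := this
          _ = Lc * (t * ‖a‖) := by
            rw [add_sub_cancel_left, norm_smul, Real.norm_eq_abs, abs_of_nonneg ht.1]
      have h3 : ⟪gradient f (w + t • a) - g, a⟫ =
          ⟪gradient f (w + t • a), a⟫ - ⟪g, a⟫ := inner_sub_left _ _ _
      nlinarith [norm_nonneg a, norm_nonneg (gradient f (w + t • a) - g), ht.1]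
    have hanti : AntitoneOn ψ (Set.Icc 0 1) := by
      apply antitoneOn_of_deriv_nonpos (convex_Icc 0 1)
      · exact fun t ht => (hψd t ht).continuousAt.continuousWithinAt
      · intro t ht
        rw [interior_Icc] at ht
        exact ((hψd t (Set.mem_Icc_of_Ioo ht)).differentiableAt).differentiableWithinAt
      · intro t ht
        rw [interior_Icc] at ht
        rw [(hψd t (Set.mem_Icc_of_Ioo ht)).deriv]
        exact hnonpos t (Set.mem_Icc_of_Ioo ht)
    have key := hanti (Set.left_mem_Icc.2 zero_le_one) (Set.right_mem_Icc.2 zero_le_one)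
      zero_le_one
    simp only [hψ, zero_smul, add_zero, one_smul, zero_mul, zero_pow, mul_zero, sub_zero,
      one_mul, one_pow, mul_one] at key
    have hga : ⟪g, a⟫ ≤ ε * (∑ i, |h i| ^ q) ^ (1 / q) := by
      rw [← hval, real_inner_comm]
      exact hmax a ha
    linarith
  · -- lower bound
    have hwa : w + ahat ∈ U := hU ahat hahatS
    have hd0 : HasDerivAt (fun t : ℝ => f (w + t • ahat)) ⟪g, ahat⟫ 0 := by
      have h0 : w + (0:ℝ) • ahat = w := by simp
      have := line_hasDerivAt f w ahat 0 (by rw [h0]; exact hdiff w hwU)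
      rwa [h0, ← hg] at this
    have htend := hasDerivAt_iff_tendsto_slope.1 hd0
    have htend' : Filter.Tendsto (slope (fun t : ℝ => f (w + t • ahat)) 0)
        (nhdsWithin 0 (Set.Ioi 0)) (nhds ⟪g, ahat⟫) :=
      htend.mono_left (nhdsWithin_mono _ (fun x hx => ne_of_gt hx))
    have hev : ∀ᶠ t in nhdsWithin (0:ℝ) (Set.Ioi 0),
        slope (fun t : ℝ => f (w + t • ahat)) 0 t ≤ f (w + ahat) - f w := by
      filter_upwards [Ioo_mem_nhdsGT (zero_lt_one)] with t ht
      have hconvt := hconv.2 hwU hwa (by linarith [ht.2] : (0:ℝ) ≤ 1 - t)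
        (le_of_lt ht.1) (by ring)
      have he : (1 - t) • w + t • (w + ahat) = w + t • ahat := by module
      rw [he] at hconvt
      rw [slope_def_field]
      have ht0 : (0:ℝ) < t := ht.1
      have h0 : w + (0:ℝ) • ahat = w := by simp
      rw [h0, sub_zero, div_le_iff₀ ht0]
      simp only [smul_eq_mul] at hconvt
      nlinarith
    have hle : ⟪g, ahat⟫ ≤ f (w + ahat) - f w := le_of_tendsto htend' hev
    rw [← hval, real_inner_comm]
    exact hle
end
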